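/- Let Σ be a finite alphabet with |Σ| = σ and let w ∈ Σ^n. Then the number of parameterized-equivalence classes represented among the fragments of w that are parameterized squares is at most 2·σ!·n, and the number of distinct words that occur as fragments of w and are parameterized squares is at most 2·(σ!)²·n. -/

import Mathlib

/-- Words `u` and `v` are parameterized-equivalent if `|u| = |v|` and there is a bijection
`f : Alph(u) → Alph(v)` with `v[i] = f(u[i])` for all `i`; equivalently, `v = u.map f` for
some function `f` injective on the set of letters of `u`. -/
def ParamEquiv {α : Type*} (u v : List α) : Prop :=
  ∃ f : α → α, Set.InjOn f {a | a ∈ u} ∧ v = u.map f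

/-- A (nonempty) parameterized square is a word `u ++ v` with `|u| = |v| ≥ 1` and `u`, `v`
parameterized-equivalent. -/
def IsParamSquare {α : Type*} (s : List α) : Prop :=
  ∃ u v : List α, s = u ++ v ∧ 1 ≤ u.length ∧ u.length = v.length ∧ ParamEquiv u v

namespace PSq

variable {α : Type*}

theorem pe_refl (u : List α) : ParamEquiv u u :=
  ⟨id, Set.injOn_id _, (List.map_id u).symm⟩

theorem pe_length {u v : List α} (h : ParamEquiv u v) : u.length = v.length := by
  obtain ⟨f, -, rfl⟩ := h; simp

theorem pe_symm {u v : List α} (h : ParamEquiv u v) : ParamEquiv v u := by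
  obtain ⟨f, hf, rfl⟩ := h
  rcases u with _ | ⟨a, u'⟩
  · exact ⟨id, Set.injOn_id _, rfl⟩
  · haveI : Nonempty α := ⟨a⟩
    set u := a :: u' with hu
    set g := Function.invFunOn f {x | x ∈ u} with hg
    have hgf : ∀ x ∈ u, g (f x) = x := fun x hx => hf.leftInvOn_invFunOn hx
    refine ⟨g, ?_, ?_⟩
    · rintro x hx y hy hxy
      simp only [Set.mem_setOf_eq, List.mem_map] at hx hy
      obtain ⟨x', hx', rfl⟩ := hx
      obtain ⟨y', hy', rfl⟩ := hy
      rw [hgf x' hx', hgf y' hy'] at hxy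
      rw [hxy]
    · rw [List.map_map]
      have h2 : ∀ x ∈ u, (g ∘ f) x = id x := fun x hx => hgf x hx
      rw [List.map_congr_left h2, List.map_id]

theorem pe_trans {u v t : List α} (h1 : ParamEquiv u v) (h2 : ParamEquiv v t) :
    ParamEquiv u t := by
  obtain ⟨f, hf, rfl⟩ := h1
  obtain ⟨g, hg, rfl⟩ := h2
  refine ⟨g ∘ f, ?_, (List.map_map)⟩
  intro x hx y hy hxy
  have hfx : f x ∈ {a | a ∈ u.map f} := by
    simp only [Set.mem_setOf_eq, List.mem_map]; exact ⟨x, hx, rfl⟩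
  have hfy : f y ∈ {a | a ∈ u.map f} := by
    simp only [Set.mem_setOf_eq, List.mem_map]; exact ⟨y, hy, rfl⟩
  exact hf hx hy (hg hfx hfy hxy)

def pSetoid (α : Type*) : Setoid (List α) :=
  ⟨ParamEquiv, ⟨pe_refl, pe_symm, pe_trans⟩⟩

theorem square_of_pe {s s' : List α} (hs : IsParamSquare s) (h : ParamEquiv s s') :
    IsParamSquare s' := by
  obtain ⟨u, v, rfl, hu1, huv, f0, hf0, rfl⟩ := hs
  obtain ⟨g, hg, rfl⟩ := h
  rcases u with _ | ⟨a, u'⟩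
  · simp at hu1
  haveI : Nonempty α := ⟨a⟩
  set u := a :: u' with hu
  set ginv := Function.invFunOn g {x | x ∈ u ++ u.map f0} with hginv
  have hgig : ∀ x ∈ u, ginv (g x) = x := fun x hx =>
    hg.leftInvOn_invFunOn (by simp [hx])
  rw [List.map_append]
  refine ⟨u.map g, (u.map f0).map g, rfl, by simpa using hu1, by simp, ?_⟩
  refine ⟨g ∘ f0 ∘ ginv, ?_, ?_⟩
  · rintro x hx y hy hxy
    simp only [Set.mem_setOf_eq, List.mem_map] at hx hy
    obtain ⟨x', hx', rfl⟩ := hx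
    obtain ⟨y', hy', rfl⟩ := hy
    simp only [Function.comp_apply, hgig x' hx', hgig y' hy'] at hxy
    have hx'' : f0 x' ∈ {a | a ∈ u ++ u.map f0} := by
      simp only [Set.mem_setOf_eq, List.mem_append, List.mem_map]
      exact Or.inr ⟨x', hx', rfl⟩
    have hy'' : f0 y' ∈ {a | a ∈ u ++ u.map f0} := by
      simp only [Set.mem_setOf_eq, List.mem_append, List.mem_map]
      exact Or.inr ⟨y', hy', rfl⟩
    have hx'y' := hf0 hx' hy' (hg hx'' hy'' hxy)
    rw [hx'y']
  · rw [List.map_map, List.map_map]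
    refine List.map_congr_left ?_
    intro x hx
    simp only [Function.comp_apply, hgig x hx]

theorem exists_perm_extend [Fintype α] (A : Finset α) (f : α → α)
    (hf : Set.InjOn f (A : Set α)) : ∃ π : Equiv.Perm α, ∀ a ∈ A, π a = f a := by
  classical
  have hcard : (A.image f).card = A.card := Finset.card_image_of_injOn hf
  have hcomp : (Aᶜ).card = ((A.image f)ᶜ).card := by
    simp [Finset.card_compl, hcard]
  let e := Finset.equivOfCardEq hcomp
  let g : α → α := fun a => if h : a ∈ A then f a else (e ⟨a, by simpa using h⟩ : α)
  have hginj : Function.Injective g := by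
    intro x y hxy
    by_cases hx : x ∈ A <;> by_cases hy : y ∈ A
    · simp only [g, dif_pos hx, dif_pos hy] at hxy
      exact hf (by simpa using hx) (by simpa using hy) hxy
    · exfalso
      simp only [g, dif_pos hx, dif_neg hy] at hxy
      have h2 := (e ⟨y, by simpa using hy⟩).2
      rw [← hxy] at h2
      simp only [Finset.mem_compl] at h2
      exact h2 (Finset.mem_image_of_mem f hx)
    · exfalso
      simp only [g, dif_neg hx, dif_pos hy] at hxy
      have h2 := (e ⟨x, by simpa using hx⟩).2
      rw [hxy] at h2
      simp only [Finset.mem_compl] at h2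
      exact h2 (Finset.mem_image_of_mem f hy)
    · simp only [g, dif_neg hx, dif_neg hy] at hxy
      have := e.injective (Subtype.ext hxy)
      simpa using congrArg Subtype.val this
  refine ⟨Equiv.ofBijective g (Finite.injective_iff_bijective.mp hginj), ?_⟩
  intro a ha
  simp [Equiv.ofBijective, g, dif_pos ha]





/-- reduce along a period valid on `[0, L)`. -/
theorem mod_reduce (g L : ℕ) (f : ℕ → α) (hg : 0 < g)
    (h : ∀ t, t + g < L → f t = f (t + g)) :
    ∀ t, t < L → f t = f (t % g) := by
  intro t
  induction t using Nat.strong_induction_on with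
  | _ t ih =>
    intro ht
    rcases lt_or_ge t g with h1 | h1
    · rw [Nat.mod_eq_of_lt h1]
    · have h2 : t - g + g = t := Nat.sub_add_cancel h1
      have h3 : f (t - g) = f t := by
        have := h (t - g) (by omega)
        rwa [h2] at this
      rw [← h3, ih (t - g) (by omega) (by omega)]
      congr 1
      conv_rhs => rw [← h2]
      rw [Nat.add_mod_right]

/-- chain a period `g` upward `k` steps, staying below `M`. -/
theorem chain_period (g M : ℕ) (f : ℕ → α)
    (h : ∀ t, t + g < M → f t = f (t + g)) :
    ∀ k a, a + k * g < M → f a = f (a + k * g) := by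
  intro k
  induction k with
  | zero => intro a _; simp
  | succ k ih =>
    intro a ha
    have h1 : a + g + k * g = a + (k+1) * g := by ring
    have h2 : f a = f (a + g) := h a (by omega)
    rw [h2]
    have := ih (a + g) (by omega)
    rwa [h1] at this

/-- extension step: full period `p` plus period `g ∣ p` on a prefix gives period `g`
everywhere. -/
theorem extend_period (p g L : ℕ) (f : ℕ → α) (hg : 0 < g) (hgp : g ∣ p)
    (hp : 0 < p) (h2pL : 2 * p < L)
    (hper : ∀ t, t + p < L → f t = f (t + p))
    (hpre : ∀ t, t + g < L - p → f t = f (t + g)) :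
    ∀ t, t + g < L → f t = f (t + g) := by
  have hmod : ∀ t, t < L → f t = f (t % p) := by
    refine mod_reduce p L f hp ?_
    intro t ht; exact hper t ht
  have hgle : g ≤ p := Nat.le_of_dvd hp hgp
  -- congruent residues below p are equal
  have hres : ∀ a b, a < p → b < p → a % g = b % g → f a = f b := by
    have hstep : ∀ a b, a ≤ b → b < p → a % g = b % g → f a = f b := by
      intro a b hab hbp hmodeq
      have hdvd : g ∣ b - a := (Nat.modEq_iff_dvd' hab).mp hmodeq
      obtain ⟨k, hk⟩ := hdvd
      rw [mul_comm] at hk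
      have hb : b = a + k * g := by omega
      rw [hb]
      refine chain_period g (L - p) f ?_ k a (by omega)
      intro t ht; exact hpre t ht
    intro a b ha hb hmodeq
    rcases le_total a b with h | h
    · exact hstep a b h hb hmodeq
    · exact (hstep b a h ha hmodeq.symm).symm
  intro t htg
  have h1 : f t = f (t % p) := hmod t (by omega)
  have h2 : f (t + g) = f ((t + g) % p) := hmod (t + g) htg
  rw [h1, h2]
  refine hres _ _ (Nat.mod_lt _ hp) (Nat.mod_lt _ hp) ?_
  have : (t % p) % g = t % g := Nat.mod_mod_of_dvd t hgp
  have h3 : ((t + g) % p) % g = (t + g) % g := Nat.mod_mod_of_dvd (t + g) hgp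
  rw [this, h3, Nat.add_mod_right]

/-- Fine and Wilf, weak version: length `≥ p + q` with periods `p`, `q` gives period
`gcd p q`. -/
theorem fine_wilf : ∀ (N p q L : ℕ) (f : ℕ → α), p + q ≤ N → 0 < p → 0 < q →
    p + q ≤ L →
    (∀ t, t + p < L → f t = f (t + p)) → (∀ t, t + q < L → f t = f (t + q)) →
    ∀ t, t + Nat.gcd p q < L → f t = f (t + Nat.gcd p q) := by
  intro N
  induction N with
  | zero => intro p q L f h hp hq; omega
  | succ N ih =>
    intro p q L f hN hp hq hL h1 h2
    rcases lt_trichotomy p q with hlt | heq | hgt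
    · -- p < q : recurse with (p, q - p) on length L - p, then extend with period p
      have hrec := ih p (q - p) (L - p) f (by omega) hp (by omega) (by omega)
        (fun t ht => h1 t (by omega))
        (fun t ht => by
          have ha : f (t + (q - p)) = f (t + (q - p) + p) := h1 (t + (q - p)) (by omega)
          have hb : t + (q - p) + p = t + q := by omega
          rw [hb] at ha
          rw [← h2 t (by omega)] at ha
          exact ha.symm)
      have hgcd : Nat.gcd p (q - p) = Nat.gcd p q := by
        conv_rhs => rw [← Nat.sub_add_cancel (le_of_lt hlt)]
        rw [Nat.gcd_add_self_right]
      rw [hgcd] at hrec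
      exact extend_period p (Nat.gcd p q) L f (Nat.gcd_pos_of_pos_left q hp)
        (Nat.gcd_dvd_left p q) hp (by omega) h1 hrec
    · subst heq
      intro t ht
      rw [Nat.gcd_self] at ht ⊢
      exact h1 t ht
    · -- q < p
      have hrec := ih (p - q) q (L - q) f (by omega) (by omega) hq (by omega)
        (fun t ht => by
          have ha : f (t + (p - q)) = f (t + (p - q) + q) := h2 (t + (p - q)) (by omega)
          have hb : t + (p - q) + q = t + p := by omega
          rw [hb] at ha
          rw [← h1 t (by omega)] at ha
          exact ha.symm)
        (fun t ht => h2 t (by omega))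
      have hgcd : Nat.gcd (p - q) q = Nat.gcd p q := by
        conv_rhs => rw [← Nat.sub_add_cancel (le_of_lt hgt)]
        rw [Nat.gcd_add_self_left]
      rw [hgcd] at hrec
      exact extend_period q (Nat.gcd p q) L f (Nat.gcd_pos_of_pos_right p hq)
        (Nat.gcd_dvd_right p q) hq (by omega) h2 hrec

theorem three_squares (X : ℕ → α) (π : Equiv.Perm α) (m1 m2 m3 : ℕ)
    (hm1 : 1 ≤ m1) (h12 : m1 < m2) (h23 : m2 < m3) (h31 : m3 < 2 * m1)
    (A1 : ∀ k, k < m1 → X (m1 + k) = π (X k))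
    (A2 : ∀ k, k < m2 → X (m2 + k) = π (X k))
    (A3 : ∀ k, k < m3 → X (m3 + k) = π (X k)) :
    ∀ t, t < 2 * m1 → X (t + (m2 - m1)) = X t := by
  set p := m2 - m1 with hpdef
  set q := m3 - m2 with hqdef
  set g := Nat.gcd p q with hgdef
  have hp : 0 < p := by omega
  have hq : 0 < q := by omega
  have hpq : p + q < m1 := by omega
  have hg0 : 0 < g := Nat.gcd_pos_of_pos_left q hp
  have hgp : g ∣ p := Nat.gcd_dvd_left p q
  have hgq : g ∣ q := Nat.gcd_dvd_right p q
  have hgle_p : g ≤ p := Nat.le_of_dvd hp hgp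
  have hgle_q : g ≤ q := Nat.le_of_dvd hq hgq
  have hP : ∀ k, k < m1 → X (m1 + k) = X (m2 + k) := by
    intro k hk
    rw [A1 k hk, A2 k (by omega)]
  set Z : ℕ → α := fun k => X (m2 + k) with hZdef
  have hZp : ∀ k, k + p < m1 → Z k = Z (k + p) := by
    intro k hk
    have e1 : m2 + k = m1 + (k + p) := by omega
    show X (m2 + k) = X (m2 + (k + p))
    rw [e1]
    exact hP (k + p) (by omega)
  have hZq : ∀ k, k + q < m1 → Z k = Z (k + q) := by
    intro k hk
    have e1 : m3 + k = m2 + (k + q) := by omega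
    show X (m2 + k) = X (m2 + (k + q))
    rw [← e1, A2 k (by omega), A3 k (by omega)]
  have hZg : ∀ k, k + g < m1 → Z k = Z (k + g) :=
    fine_wilf (p + q) p q m1 Z le_rfl hp hq (le_of_lt hpq) hZp hZq
  have hXg : ∀ k, k + g < m1 → X k = X (k + g) := by
    intro k hk
    have e1 : π (X k) = π (X (k + g)) := by
      rw [← A2 k (by omega), ← A2 (k + g) (by omega)]
      exact hZg k hk
    exact π.injective e1
  have hmod : ∀ a, a < m1 → X a = X (a % g) := mod_reduce g m1 X hg0 hXg
  have hcong : ∀ a b, a < m1 → b < m1 → a % g = b % g → X a = X b := by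
    intro a b ha hb h
    rw [hmod a ha, hmod b hb, h]
  set base := m1 - q with hbasedef
  have hKEY : ∀ s, base ≤ s → s < base + min p q → X s = π (X (s + q - m1)) := by
    intro s hs1 hs2
    have hsm1 : s < m1 := by
      have : min p q ≤ q := min_le_right p q
      omega
    have hstep1 : X (s + q) = X s := by
      have e1 : m2 + (s + q) = m3 + s := by omega
      have e2 := A2 (s + q) (by have := min_le_left p q; omega)
      rw [e1, A3 s (by omega)] at e2
      exact (π.injective e2).symm
    have e3 : s + q = m1 + (s + q - m1) := by omega
    have e4 := A1 (s + q - m1) (by have := min_le_left p q; have := min_le_right p q; omega)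
    rw [← e3] at e4
    rw [← hstep1, e4]
  intro t ht
  rcases lt_or_ge t (m1 - p) with h1 | h1
  · -- low region: congruence mod g
    refine hcong (t + p) t (by omega) (by omega) ?_
    obtain ⟨c, hc⟩ := hgp
    rw [hc, Nat.add_mul_mod_self_left]
  rcases lt_or_ge t m1 with h2 | h2
  · -- the gap
    set r0 := (t + (g - base % g)) % g with hr0def
    set s := base + r0 with hsdef
    have hbmod : base % g < g := Nat.mod_lt _ hg0
    have hr0 : r0 < g := Nat.mod_lt _ hg0
    have hdm := Nat.div_add_mod base g
    have hsmod : s % g = t % g := by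
      have h1' : s % g = (base + (t + (g - base % g))) % g := by
        show s % g = _
        rw [hsdef]
        exact (Nat.ModEq.add_left base (Nat.mod_modEq _ g))
      have e2 : base + (t + (g - base % g)) = t + g * (base / g + 1) := by
        have : g * (base / g + 1) = g * (base / g) + g := by ring
        omega
      rw [h1', e2, Nat.add_mul_mod_self_left]
    have hsm1 : s < m1 := by omega
    have hq0 : q % g = 0 := by obtain ⟨c, hc⟩ := hgq; rw [hc]; exact Nat.mul_mod_right g c
    have hp0 : p % g = 0 := by obtain ⟨c, hc⟩ := hgp; rw [hc]; exact Nat.mul_mod_right g c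
    have hcong2 : (s + q - m1) % g = (t + p - m1) % g := by
      have haddcong : (s + q) % g = (t + p) % g := by
        rw [Nat.add_mod, Nat.add_mod t p, hq0, hp0, hsmod]
      have h5 : (s + q - m1) + m1 = s + q := by omega
      have h6 : (t + p - m1) + m1 = t + p := by omega
      have h7 : (s + q - m1) + m1 ≡ (t + p - m1) + m1 [MOD g] := by
        rw [h5, h6]; exact haddcong
      exact Nat.ModEq.add_right_cancel' m1 h7
    have hXts : X t = X s := hcong t s h2 hsm1 hsmod.symm
    have hsin : s < base + min p q := by
      have hminp := min_le_left p q
      have hminq := min_le_right p q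
      have : g ≤ min p q := le_min hgle_p hgle_q
      omega
    have hkey := hKEY s (by omega) hsin
    have hXk : X (s + q - m1) = X (t + p - m1) :=
      hcong _ _ (by omega) (by omega) hcong2
    have e7 : t + p = m1 + (t + p - m1) := by omega
    have hA : X (t + p) = π (X (t + p - m1)) := by
      conv_lhs => rw [e7]
      exact A1 (t + p - m1) (by omega)
    rw [hA, ← hXk, ← hkey]
    exact hXts.symm
  · -- high region
    have e1 : t + p = m2 + (t - m1) := by omega
    have e2 : t = m1 + (t - m1) := by omega
    rw [e1]
    conv_rhs => rw [e2]
    exact (hP (t - m1) (by omega)).symm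

theorem square_perm [Fintype α] (d : α) {s : List α} (h : IsParamSquare s) :
    ∃ (m : ℕ) (π : Equiv.Perm α), s.length = 2 * m ∧ 1 ≤ m ∧
      ∀ k, k < m → s.getD (s.length / 2 + k) d = π (s.getD k d) := by
  classical
  obtain ⟨u, v, rfl, hu1, hlen, f, hf, rfl⟩ := h
  set m := u.length with hm
  have hslen : (u ++ u.map f).length = 2 * m := by
    simp [List.length_append, hm]; omega
  have hA : Set.InjOn f (↑u.toFinset : Set α) := by
    intro x hx y hy hxy
    exact hf (by simpa using hx) (by simpa using hy) hxy
  obtain ⟨π, hπ⟩ := exists_perm_extend u.toFinset f hA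
  refine ⟨m, π, hslen, hu1, ?_⟩
  intro k hk
  have hd2 : (u ++ u.map f).length / 2 = m := by rw [hslen]; omega
  rw [hd2]
  have hk2 : k < (u ++ u.map f).length := by rw [hslen]; omega
  have hmk : m + k < (u ++ u.map f).length := by rw [hslen]; omega
  rw [List.getD_eq_getElem _ d hmk, List.getD_eq_getElem _ d hk2]
  have e1 : (u ++ u.map f)[k]'hk2 = u[k]'hk := List.getElem_append_left hk
  have hkm : k < (u.map f).length := by simpa using hk
  have e2 : (u ++ u.map f)[m + k]'hmk = (u.map f)[k]'hkm := by
    have h₁ : u.length ≤ m + k := by omega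
    have := List.getElem_append_right (as := u) (bs := u.map f) (i := m + k) h₁ (h₂ := hmk)
    have e3 : m + k - u.length = k := by omega
    simpa [e3] using this
  rw [e1, e2, List.getElem_map]
  exact (hπ _ (by rw [List.mem_toFinset]; exact u.getElem_mem hk)).symm

end PSq

/-- Let `Σ` be an alphabet of size `σ` and `w ∈ Σ^n`.  Then the number of
parameterized-equivalence classes represented among the fragments of `w` that are
parameterized squares is at most `2·σ!·n` (there is a set of at most `2·σ!·n` words such
that every parameterized-square fragment of `w` is parameterized-equivalent to one of
them), and the number of distinct words occurring as fragments of `w` that are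
parameterized squares is at most `2·(σ!)²·n`. -/
theorem param_squares_bounds {α : Type*} [Fintype α] (w : List α) (n : ℕ)
    (hn : w.length = n) :
    (∃ S : Finset (List α), S.card ≤ 2 * (Fintype.card α).factorial * n ∧
      ∀ s : List α, s <:+: w → IsParamSquare s → ∃ t ∈ S, ParamEquiv s t) ∧
    {s : List α | s <:+: w ∧ IsParamSquare s}.ncard ≤
      2 * (Fintype.card α).factorial ^ 2 * n := by
  classical
  by_cases hw : w = []
  · subst hw
    have hn0 : n = 0 := by simpa using hn.symm
    subst hn0
    have hempty : ∀ s : List α, s <:+: ([] : List α) → ¬ IsParamSquare s := by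
      intro s hs hsq
      have hsnil : s = [] := List.eq_nil_of_infix_nil hs
      obtain ⟨u, v, huv, hu1, -, -⟩ := hsq
      rw [hsnil] at huv
      have : u = [] := by
        rcases List.append_eq_nil_iff.mp huv.symm with ⟨h, -⟩
        exact h
      simp [this] at hu1
    constructor
    · exact ⟨∅, by simp, fun s hs hsq => absurd hsq (hempty s hs)⟩
    · have : {s : List α | s <:+: ([] : List α) ∧ IsParamSquare s} = ∅ := by
        ext s; simp only [Set.mem_setOf_eq, Set.mem_empty_iff_false, iff_false]
        rintro ⟨h1, h2⟩; exact hempty s h1 h2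
      rw [this]
      simp
  · -- main case
    haveI : Nonempty α := ⟨w.head hw⟩
    set d : α := w.head hw with hd
    set X : ℕ → α := fun k => w.getD k d with hX
    set frag : ℕ → ℕ → List α := fun i l => (w.drop i).take l with hfrag
    have hfraglen : ∀ i l, i + l ≤ n → (frag i l).length = l := by
      intro i l h; simp only [hfrag, List.length_take, List.length_drop, hn]; omega
    have hfragget : ∀ i l k, i + l ≤ n → k < l → (frag i l).getD k d = X (i + k) := by
      intro i l k h1 h2
      have hk : k < (frag i l).length := by rw [hfraglen _ _ h1]; exact h2
      rw [List.getD_eq_getElem _ _ hk]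
      have hik : i + k < w.length := by omega
      have e1 : (frag i l)[k]'hk = w[i + k]'hik := by
        simp only [hfrag]
        rw [List.getElem_take, List.getElem_drop]
      rw [e1, hX]
      exact (List.getD_eq_getElem _ _ hik).symm
    have hfrag_map : ∀ i j l (f : α → α), i + l ≤ n → j + l ≤ n →
        (∀ k, k < l → X (j + k) = f (X (i + k))) → frag j l = (frag i l).map f := by
      intro i j l f h1 h2 hpt
      refine List.ext_getElem (by rw [hfraglen _ _ h2]; simp [hfraglen _ _ h1]) ?_
      intro k hk1 hk2
      have hkl : k < l := by rwa [hfraglen _ _ h2] at hk1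
      have e1 : (frag j l)[k]'hk1 = X (j + k) := by
        rw [← hfragget j l k h2 hkl]
        exact (List.getD_eq_getElem _ _ hk1).symm
      have hk3 : k < (frag i l).length := by rw [hfraglen _ _ h1]; exact hkl
      have e2 : ((frag i l).map f)[k]'hk2 = f ((frag i l)[k]'hk3) := List.getElem_map _
      have e3 : (frag i l)[k]'hk3 = X (i + k) := by
        rw [← hfragget i l k h1 hkl]
        exact (List.getD_eq_getElem _ _ hk3).symm
      rw [e1, e2, e3]
      exact hpt k hkl
    -- canonical representatives
    set r : List α → List α := fun s => (Quotient.mk (PSq.pSetoid α) s).out with hr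
    have hr1 : ∀ s, ParamEquiv (r s) s := by
      intro s
      have : (Quotient.mk (PSq.pSetoid α) ((Quotient.mk (PSq.pSetoid α) s).out))
          = Quotient.mk (PSq.pSetoid α) s := Quotient.out_eq _
      exact Quotient.exact this
    have hr2 : ∀ s t, ParamEquiv s t → r s = r t := by
      intro s t h
      simp only [hr]
      rw [Quotient.sound (s := PSq.pSetoid α) h]
    set F : Finset (List α) :=
      ((Finset.range (n+1)) ×ˢ (Finset.range (n+1))).image (fun pr => frag pr.1 pr.2)
      with hF
    set Fsq : Finset (List α) := F.filter IsParamSquare with hFsq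
    set S : Finset (List α) := Fsq.image r with hS
    have hmemF : ∀ s : List α, s <:+: w → s ∈ F := by
      intro s hs
      obtain ⟨pre, suf, hww⟩ := hs
      have hdrop : w.drop pre.length = s ++ suf := by
        rw [← hww, List.append_assoc, List.drop_left]
      have hfr : frag pre.length s.length = s := by
        simp only [hfrag, hdrop, List.take_left]
      have hlentot : pre.length + s.length + suf.length = n := by
        have h := congrArg List.length hww
        simp only [List.length_append] at h
        omega
      have hpre : pre.length ≤ n := by omega
      have hslen : s.length ≤ n := by omega
      rw [hF]
      have hmem : (pre.length, s.length) ∈ (Finset.range (n+1)) ×ˢ (Finset.range (n+1)) :=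
        Finset.mem_product.mpr ⟨Finset.mem_range.mpr (by omega), Finset.mem_range.mpr (by omega)⟩
      exact Finset.mem_image.mpr ⟨(pre.length, s.length), hmem, hfr⟩
    have hmemFsq : ∀ s : List α, s <:+: w → IsParamSquare s → s ∈ Fsq := by
      intro s h1 h2
      rw [hFsq]
      exact Finset.mem_filter.mpr ⟨hmemF s h1, h2⟩
    have hrS : ∀ t ∈ S, r t = t := by
      intro t ht
      obtain ⟨s₀, -, rfl⟩ := Finset.mem_image.mp ht
      exact hr2 _ _ (hr1 s₀)
    have hS_sq : ∀ t ∈ S, IsParamSquare t := by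
      intro t ht
      obtain ⟨s₀, hs₀, rfl⟩ := Finset.mem_image.mp ht
      have hsq₀ : IsParamSquare s₀ := (Finset.mem_filter.mp hs₀).2
      exact PSq.square_of_pe hsq₀ (PSq.pe_symm (hr1 s₀))
    have hS_occ : ∀ t ∈ S, ∃ i, i + t.length ≤ n ∧ ParamEquiv (frag i t.length) t := by
      intro t ht
      obtain ⟨s₀, hs₀, rfl⟩ := Finset.mem_image.mp ht
      obtain ⟨⟨i, l⟩, hil, hfr⟩ := Finset.mem_image.mp (Finset.mem_filter.mp hs₀).1
      have hil' := Finset.mem_product.mp hil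
      have hi1 : i < n + 1 := Finset.mem_range.mp hil'.1
      have hiln : i + s₀.length ≤ n := by
        rw [← hfr]; simp only [hfrag, List.length_take, List.length_drop, hn]
        have h1 : min l (n - i) ≤ n - i := min_le_right _ _
        omega
      have hl1 : s₀.length ≤ l := by
        rw [← hfr]; simp only [hfrag, List.length_take, List.length_drop]; omega
      have hfr2 : frag i s₀.length = s₀ := by
        have h1 : frag i s₀.length = (frag i l).take s₀.length := by
          simp only [hfrag, List.take_take]
          congr 1
          omega
        rw [h1, hfr, List.take_length]
      have hlen1 : (r s₀).length = s₀.length := PSq.pe_length (hr1 s₀)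
      refine ⟨i, by rw [hlen1]; exact hiln, ?_⟩
      rw [hlen1, hfr2]
      exact PSq.pe_symm (hr1 s₀)
    -- choose occurrence data
    have key : ∀ t : List α, ∃ (i m : ℕ) (π : Equiv.Perm α), t ∈ S →
        (t.length = 2 * m ∧ 1 ≤ m ∧ i + 2 * m ≤ n ∧ ParamEquiv (frag i (2 * m)) t ∧
         (∀ k, k < m → X (i + m + k) = π (X (i + k))) ∧
         (∀ j, i < j → j + 2 * m ≤ n → ¬ ParamEquiv (frag j (2 * m)) t)) := by
      intro t
      by_cases ht : t ∈ S
      swap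
      · exact ⟨0, 0, 1, fun h => absurd h ht⟩
      have hsq := hS_sq t ht
      obtain ⟨u, v, huv, hu1, hlen, -⟩ := hsq
      have htlen : t.length = 2 * u.length := by
        rw [huv]; simp only [List.length_append]; omega
      set m := u.length with hm
      set OS : Finset ℕ := (Finset.range n).filter
        (fun i => i + 2 * m ≤ n ∧ ParamEquiv (frag i (2 * m)) t) with hOS
      have hOSne : OS.Nonempty := by
        obtain ⟨i₀, hi₀, hpe₀⟩ := hS_occ t ht
        rw [htlen] at hi₀ hpe₀
        exact ⟨i₀, Finset.mem_filter.mpr ⟨Finset.mem_range.mpr (by omega), by omega, hpe₀⟩⟩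
      have himem' := Finset.mem_filter.mp (OS.max'_mem hOSne)
      have hin : OS.max' hOSne < n := Finset.mem_range.mp himem'.1
      obtain ⟨hi2m, hipe⟩ := himem'.2
      set i := OS.max' hOSne with hi
      have hmax : ∀ j, i < j → j + 2 * m ≤ n → ¬ ParamEquiv (frag j (2 * m)) t := by
        intro j hij hjn hpe
        have hjmem : j ∈ OS := by
          refine Finset.mem_filter.mpr ⟨Finset.mem_range.mpr (by omega), hjn, hpe⟩
        have := OS.le_max' j hjmem
        omega
      have hfsq : IsParamSquare (frag i (2 * m)) :=
        PSq.square_of_pe (hS_sq t ht) (PSq.pe_symm hipe)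
      obtain ⟨m', π, hm'len, hm'1, hpt⟩ := PSq.square_perm d hfsq
      have hfl : (frag i (2 * m)).length = 2 * m := hfraglen _ _ hi2m
      have hmm' : m' = m := by rw [hfl] at hm'len; omega
      refine ⟨i, m, π, fun _ => ⟨htlen, by omega, hi2m, hipe, ?_, hmax⟩⟩
      intro k hk
      have h1 := hpt k (by omega)
      have e0 : (frag i (2 * m)).length / 2 = m := by rw [hfl]; omega
      rw [e0] at h1
      rw [hfragget i (2*m) (m + k) hi2m (by omega)] at h1
      rw [hfragget i (2*m) k hi2m (by omega)] at h1
      have e1 : i + (m + k) = i + m + k := by omega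
      rw [e1] at h1
      exact h1
    choose I M Pi hKey using key
    -- the injection
    set bit : List α → Bool := fun t =>
      if (∀ t' ∈ S, I t' = I t → Pi t' = Pi t → M t ≤ M t') then true else false
      with hbit
    set ψ : List α → ℕ × Equiv.Perm α × Bool := fun t => (I t, Pi t, bit t) with hψ
    -- three squares kill
    have hkill : ∀ t₀ ∈ S, ∀ t₂ ∈ S, ∀ t₃ ∈ S, I t₀ = I t₃ → I t₂ = I t₃ →
        Pi t₀ = Pi t₃ → Pi t₂ = Pi t₃ → M t₀ < M t₂ → M t₂ < M t₃ → False := by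
      intro t₀ h₀ t₂ h₂ t₃ h₃ e1 e2 e3 e4 lt1 lt2
      obtain ⟨len₀, hm₀, hn₀, hpe₀, hA₀, hmax₀⟩ := hKey t₀ h₀
      obtain ⟨len₂, hm₂, hn₂, hpe₂, hA₂, hmax₂⟩ := hKey t₂ h₂
      obtain ⟨len₃, hm₃, hn₃, hpe₃, hA₃, hmax₃⟩ := hKey t₃ h₃
      set i := I t₃ with hidef
      set π := Pi t₃ with hπdef
      set m1 := M t₀ with hm1def
      set m2 := M t₂ with hm2def
      set m3 := M t₃ with hm3def
      rw [e1] at hn₀ hpe₀ hA₀ hmax₀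
      rw [e2] at hn₂ hpe₂ hA₂ hmax₂
      rw [e3] at hA₀
      rw [e4] at hA₂
      -- full square relations
      have B1 : ∀ k, k < m1 → X (i + (m1 + k)) = π (X (i + k)) := by
        intro k hk
        have := hA₀ k hk
        rwa [← Nat.add_assoc]
      have B2 : ∀ k, k < m2 → X (i + (m2 + k)) = π (X (i + k)) := by
        intro k hk
        have := hA₂ k hk
        rwa [← Nat.add_assoc]
      have B3 : ∀ k, k < m3 → X (i + (m3 + k)) = π (X (i + k)) := by
        intro k hk
        have := hA₃ k hk
        rwa [← Nat.add_assoc]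
      by_cases hcase : 2 * m1 ≤ m3
      · -- the small square reoccurs at i + m3, mapped by π
        have hmap : frag (i + m3) (2 * m1) = (frag i (2 * m1)).map ⇑π := by
          refine hfrag_map i (i + m3) (2 * m1) ⇑π (by omega) (by omega) ?_
          intro k hk
          have h0 := B3 k (by omega)
          have e : i + (m3 + k) = i + m3 + k := by omega
          rwa [e] at h0
        have hpe' : ParamEquiv (frag i (2 * m1)) (frag (i + m3) (2 * m1)) :=
          ⟨⇑π, (Equiv.injective π).injOn, hmap⟩
        have hocc : ParamEquiv (frag (i + m3) (2 * m1)) t₀ :=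
          PSq.pe_trans (PSq.pe_symm hpe') hpe₀
        exact hmax₀ (i + m3) (by omega) (by omega) hocc
      · -- three squares with the same permutation
        have h3s := PSq.three_squares (fun k => X (i + k)) π m1 m2 m3 hm₀ lt1 lt2
          (by omega) B1 B2 B3
        have hmap : frag (i + (m2 - m1)) (2 * m1) = frag i (2 * m1) := by
          have hid : frag (i + (m2 - m1)) (2 * m1) = (frag i (2 * m1)).map id := by
            refine hfrag_map i (i + (m2 - m1)) (2 * m1) id (by omega) (by omega) ?_
            intro k hk
            have h0 : X (i + (k + (m2 - m1))) = X (i + k) := h3s k hk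
            simp only [id_eq]
            have e : i + (m2 - m1) + k = i + (k + (m2 - m1)) := by omega
            rw [e]
            exact h0
          rw [hid, List.map_id]
        have hocc : ParamEquiv (frag (i + (m2 - m1)) (2 * m1)) t₀ := by
          rw [hmap]; exact hpe₀
        exact hmax₀ (i + (m2 - m1)) (by omega) (by omega) hocc
    -- injectivity of ψ on S
    have hMeq : ∀ t ∈ S, ∀ t' ∈ S, I t = I t' → M t = M t' → t = t' := by
      intro t ht t' ht' hI hM
      obtain ⟨-, -, -, hpe, -, -⟩ := hKey t ht
      obtain ⟨-, -, -, hpe', -, -⟩ := hKey t' ht'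
      rw [hI, hM] at hpe
      have hpett' : ParamEquiv t t' := PSq.pe_trans (PSq.pe_symm hpe) hpe'
      rw [← hrS t ht, ← hrS t' ht']
      exact hr2 _ _ hpett'
    have haux : ∀ t ∈ S, ∀ t' ∈ S, ψ t = ψ t' → M t < M t' → False := by
      intro t ht t' ht' hψeq hMlt
      have hI : I t = I t' := congrArg Prod.fst hψeq
      have hPi : Pi t = Pi t' := congrArg (Prod.fst ∘ Prod.snd) hψeq
      have hB : bit t = bit t' := congrArg (Prod.snd ∘ Prod.snd) hψeq
      by_cases hc' : (∀ t'' ∈ S, I t'' = I t' → Pi t'' = Pi t' → M t' ≤ M t'')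
      · have := hc' t ht hI hPi
        omega
      · have hbt' : bit t' = false := by rw [hbit]; simp only [if_neg hc']
        have hbt : bit t = false := by rw [hB, hbt']
        have hct : ¬ (∀ t'' ∈ S, I t'' = I t → Pi t'' = Pi t → M t ≤ M t'') := by
          intro hc
          rw [hbit] at hbt
          simp only [if_pos hc] at hbt
          exact Bool.noConfusion hbt
        push_neg at hct
        obtain ⟨t₀, h₀, hI₀, hPi₀, hM₀⟩ := hct
        exact hkill t₀ h₀ t ht t' ht' (by rw [hI₀, hI]) hI (by rw [hPi₀, hPi]) hPi
          (by omega) hMlt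
    have hinj : Set.InjOn ψ ↑S := by
      intro t ht t' ht' hψeq
      simp only [Finset.mem_coe] at ht ht'
      by_contra hne
      have hI : I t = I t' := congrArg Prod.fst hψeq
      have hMne : M t ≠ M t' := fun h => hne (hMeq t ht t' ht' hI h)
      rcases lt_or_gt_of_ne hMne with h | h
      · exact haux t ht t' ht' hψeq h
      · exact haux t' ht' t ht hψeq.symm h
    -- cardinality bound for S
    have hψmem : ∀ t ∈ S, ψ t ∈ (Finset.range n) ×ˢ
        ((Finset.univ : Finset (Equiv.Perm α)) ×ˢ (Finset.univ : Finset Bool)) := by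
      intro t ht
      obtain ⟨-, hm, hn', -, -, -⟩ := hKey t ht
      exact Finset.mem_product.mpr ⟨Finset.mem_range.mpr (show I t < n by omega),
        Finset.mem_product.mpr ⟨Finset.mem_univ _, Finset.mem_univ _⟩⟩
    have hcardS : S.card ≤ 2 * (Fintype.card α).factorial * n := by
      have h1 : S.card = (S.image ψ).card := (Finset.card_image_of_injOn hinj).symm
      have h2 : S.image ψ ⊆ (Finset.range n) ×ˢ
          ((Finset.univ : Finset (Equiv.Perm α)) ×ˢ (Finset.univ : Finset Bool)) := by
        intro x hx
        obtain ⟨t, ht, rfl⟩ := Finset.mem_image.mp hx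
        exact hψmem t ht
      have h3 := Finset.card_le_card h2
      rw [Finset.card_product, Finset.card_product] at h3
      simp only [Finset.card_range, Finset.card_univ, Fintype.card_perm,
        Fintype.card_bool] at h3
      rw [h1]
      calc (S.image ψ).card ≤ n * ((Fintype.card α).factorial * 2) := h3
        _ = 2 * (Fintype.card α).factorial * n := by ring
    -- second bound
    set T : Finset (List α) :=
      ((S ×ˢ (Finset.univ : Finset (Equiv.Perm α)))).image (fun pr => pr.1.map ⇑pr.2)
      with hT
    have hsub : {s : List α | s <:+: w ∧ IsParamSquare s} ⊆ ↑T := by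
      rintro s ⟨hinf, hsq⟩
      have hsF : s ∈ Fsq := hmemFsq s hinf hsq
      have hrsS : r s ∈ S := Finset.mem_image_of_mem r hsF
      obtain ⟨f, hf, hsf⟩ := hr1 s
      obtain ⟨π, hπ⟩ := PSq.exists_perm_extend (r s).toFinset f
        (by intro x hx y hy hxy; exact hf (by simpa using hx) (by simpa using hy) hxy)
      have hmapeq : s = (r s).map ⇑π := by
        conv_lhs => rw [hsf]
        refine List.map_congr_left ?_
        intro a ha
        exact (hπ a (List.mem_toFinset.mpr ha)).symm
      refine Finset.mem_coe.mpr (Finset.mem_image.mpr ⟨(r s, π), ?_, hmapeq.symm⟩)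
      simp [Finset.mem_product, hrsS]
    have hTcard : T.card ≤ 2 * (Fintype.card α).factorial ^ 2 * n := by
      have h1 : T.card ≤ S.card * (Fintype.card α).factorial := by
        calc T.card ≤ (S ×ˢ (Finset.univ : Finset (Equiv.Perm α))).card :=
              Finset.card_image_le
          _ = S.card * (Fintype.card α).factorial := by
              rw [Finset.card_product, Finset.card_univ, Fintype.card_perm]
      calc T.card ≤ S.card * (Fintype.card α).factorial := h1
        _ ≤ (2 * (Fintype.card α).factorial * n) * (Fintype.card α).factorial :=
            Nat.mul_le_mul_right _ hcardS
        _ = 2 * (Fintype.card α).factorial ^ 2 * n := by ring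
    refine ⟨⟨S, hcardS, ?_⟩, ?_⟩
    · intro s hinf hsq
      have hsF : s ∈ Fsq := hmemFsq s hinf hsq
      exact ⟨r s, Finset.mem_image_of_mem r hsF, PSq.pe_symm (hr1 s)⟩
    · calc {s : List α | s <:+: w ∧ IsParamSquare s}.ncard
          ≤ (↑T : Set (List α)).ncard := Set.ncard_le_ncard hsub T.finite_toSet
        _ = T.card := Set.ncard_coe_finset T
        _ ≤ 2 * (Fintype.card α).factorial ^ 2 * n := hTcard
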